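/- Given a graph G without isolated vertices, construct a graph H whose vertex set consists of three vertices e_x, e_{xy}, e_y for each edge {x,y} of G, with edges {e_{xy}, e_x} and {e_{xy}, e_y}, and partition the edges of H into groups (hedges) E_z for each vertex z of G, where E_z contains all edges of the form {e_{uz}, e_z}. Then G has a vertex cover of size at most k if and only if there is a set U of at most k hedges of H such that removing all edges of the hedges in U from H leaves a graph with no induced P_3. -/
import Mathlib


/-- Adjacency of the hedge graph `H` built from `G`, after removing the set of hedges `U`.
For each edge `{x,y}` of `G` there are three vertices `(s(x,y), none) = e_{xy}`,
`(s(x,y), some x) = e_x` and `(s(x,y), some y) = e_y`, with edges `{e_{xy}, e_x}`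
(belonging to hedge `x`) and `{e_{xy}, e_y}` (belonging to hedge `y`); an edge survives
iff its hedge is not in `U`. -/
def hedgeAdj {V : Type*} (G : SimpleGraph V) (U : Set V)
    (a b : Sym2 V × Option V) : Prop :=
  ∃ x y : V, G.Adj x y ∧ x ∉ U ∧
    ((a = (s(x, y), (none : Option V)) ∧ b = (s(x, y), some x)) ∨
     (a = (s(x, y), some x) ∧ b = (s(x, y), (none : Option V))))

/-- `G` (without isolated vertices) has a vertex cover of size at most `k`
iff at most `k` hedges can be removed from `H` so that no induced `P₃` remains. -/
theorem stmt12 {V : Type*} [Fintype V] [DecidableEq V]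
    (G : SimpleGraph V) (hniso : ∀ v : V, ∃ u, G.Adj v u) (k : ℕ) :
    (∃ S : Finset V, (∀ a b, G.Adj a b → a ∈ S ∨ b ∈ S) ∧ S.card ≤ k) ↔
    (∃ U : Finset V, U.card ≤ k ∧
      ∀ a b c : Sym2 V × Option V,
        hedgeAdj G (↑U) a b → hedgeAdj G (↑U) b c → a ≠ c → hedgeAdj G (↑U) a c) := by
  constructor
  · rintro ⟨S, hcov, hcard⟩
    refine ⟨S, hcard, ?_⟩
    rintro a b c ⟨x, y, hxy, hxU, hab⟩ ⟨x', y', hxy', hxU', hbc⟩ hac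
    exfalso
    rcases hab with ⟨ha, hb⟩ | ⟨ha, hb⟩ <;> subst ha <;> subst hb <;>
      rcases hbc with ⟨hb', hc⟩ | ⟨hb', hc⟩ <;> subst hc
    · -- b = (s, some x) = (s', none): impossible
      simp at hb'
    · -- b = (s, some x) = (s', some x'): a = c, contradiction
      rw [Prod.mk.injEq, Option.some.injEq] at hb'
      exact hac (by rw [hb'.1])
    · -- b = (s, none) = (s', none): real P3 case
      rw [Prod.mk.injEq] at hb'
      have hs := hb'.1
      by_cases hxx : x = x'
      · exact hac (by rw [hs, hxx])
      · rcases Sym2.eq_iff.mp hs with ⟨h1, h2⟩ | ⟨h1, h2⟩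
        · exact hxx h1
        · rcases hcov x y hxy with h | h
          · exact hxU (by simpa using h)
          · exact hxU' (by rw [← h2]; simpa using h)
    · simp at hb'
  · rintro ⟨U, hcard, hP3⟩
    refine ⟨U, ?_, hcard⟩
    intro x y hxy
    by_contra hcon
    push_neg at hcon
    obtain ⟨hx, hy⟩ := hcon
    have h1 : hedgeAdj G (↑U) (s(x,y), some x) (s(x,y), none) :=
      ⟨x, y, hxy, by simpa using hx, Or.inr ⟨rfl, rfl⟩⟩
    have h2 : hedgeAdj G (↑U) (s(x,y), none) (s(x,y), some y) :=
      ⟨y, x, hxy.symm, by simpa using hy,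
        Or.inl ⟨by rw [Sym2.eq_swap], by rw [Sym2.eq_swap]⟩⟩
    have hne : ((s(x,y), some x) : Sym2 V × Option V) ≠ (s(x,y), some y) := by
      simp [G.ne_of_adj hxy]
    obtain ⟨x', y', _, _, h⟩ := hP3 _ _ _ h1 h2 hne
    rcases h with ⟨h1', h2'⟩ | ⟨h1', h2'⟩ <;> simp_all
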